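/- arXiv:math/0209329 — 2 statements merged into one kernel-verified Lean document; each statement's English description precedes it below -/
import Mathlib

section
/- Let dμ be a measure on ℂ with finite moments and infinite support, let p_n(z) be the associated orthonormal polynomials, and let K_n(z,w) = Σ_{j=0}^n p_j(z)·conj(p_j(w)) be the reproducing kernel. If z₀ ∈ ℂ and w is a zero of p_j for some j ≤ n+1, then |z₀ − w| ≥ (|p_j(z₀)| / K_n(z₀,z₀)^{1/2}) · dist(w, supp(dμ)). -/
open MeasureTheory Polynomial Finset

/-- The (topological) support of a measure on a metric space: points all of whose
neighborhoods have positive measure. -/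
def measSupport (μ : Measure ℂ) : Set ℂ :=
  {z | ∀ ε > 0, 0 < μ (Metric.ball z ε)}

-- span lemma
lemma span_aux (p : ℕ → Polynomial ℂ) (hdeg : ∀ n, (p n).natDegree = n)
    (hlc : ∀ n, (p n).leadingCoeff ≠ 0) :
    ∀ m (r : Polynomial ℂ), r.natDegree ≤ m →
      ∃ c : ℕ → ℂ, r = ∑ k ∈ Finset.range (m+1), Polynomial.C (c k) * p k := by
  intro m
  induction m with
  | zero =>
    intro r hr
    set a := (p 0).coeff 0 with ha_def
    have ha : a ≠ 0 := by
      have := hlc 0; rwa [Polynomial.leadingCoeff, hdeg 0] at this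
    have h0 : p 0 = Polynomial.C a :=
      Polynomial.eq_C_of_natDegree_le_zero (le_of_eq (hdeg 0))
    refine ⟨fun _ => r.coeff 0 / a, ?_⟩
    rw [Finset.sum_range_one]
    show r = Polynomial.C (r.coeff 0 / a) * p 0
    rw [h0, ← Polynomial.C_mul, div_mul_cancel₀ _ ha]
    exact Polynomial.eq_C_of_natDegree_le_zero hr
  | succ m ih =>
    intro r hr
    have ha : (p (m+1)).coeff (m+1) ≠ 0 := by
      have := hlc (m+1); rwa [Polynomial.leadingCoeff, hdeg (m+1)] at this
    set v := r.coeff (m+1) / (p (m+1)).coeff (m+1) with hv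
    set r' := r - Polynomial.C v * p (m+1) with hr'
    have hdr' : r'.natDegree ≤ m := by
      rw [Polynomial.natDegree_le_iff_coeff_eq_zero]
      intro N hN
      have hN' : m + 1 ≤ N := hN
      rw [hr', Polynomial.coeff_sub, Polynomial.coeff_C_mul]
      rcases eq_or_lt_of_le hN' with h | h
      · rw [← h, hv, div_mul_cancel₀ _ ha, sub_self]
      · rw [Polynomial.coeff_eq_zero_of_natDegree_lt (lt_of_le_of_lt hr h),
          Polynomial.coeff_eq_zero_of_natDegree_lt (by rw [hdeg]; exact h),
          mul_zero, sub_self]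
    obtain ⟨c, hc⟩ := ih r' hdr'
    refine ⟨fun k => if k = m+1 then v else c k, ?_⟩
    rw [Finset.sum_range_succ]
    show r = (∑ k ∈ Finset.range (m+1), Polynomial.C (if k = m+1 then v else c k) * p k)
      + Polynomial.C (if m + 1 = m+1 then v else c (m+1)) * p (m+1)
    rw [if_pos rfl]
    have : ∑ k ∈ Finset.range (m+1), Polynomial.C (if k = m+1 then v else c k) * p k
        = ∑ k ∈ Finset.range (m+1), Polynomial.C (c k) * p k := by
      refine Finset.sum_congr rfl fun k hk => ?_
      rw [if_neg (by simp at hk; omega)]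
    rw [this, ← hc, hr']
    ring

lemma eval_bound (r : Polynomial ℂ) (z : ℂ) :
    ‖r.eval z‖ ≤ ∑ i ∈ Finset.range (r.natDegree + 1), ‖r.coeff i‖ * ‖z‖ ^ i := by
  rw [Polynomial.eval_eq_sum_range]
  refine (norm_sum_le _ _).trans ?_
  refine Finset.sum_le_sum fun i _ => ?_
  rw [norm_mul, norm_pow]

lemma integrable_mul_conj (μ : Measure ℂ)
    (hmom : ∀ n : ℕ, Integrable (fun z : ℂ => ‖z‖ ^ n) μ)
    (r s : Polynomial ℂ) :
    Integrable (fun z => r.eval z * (starRingEnd ℂ) (s.eval z)) μ := by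
  have hcont : Continuous fun z : ℂ => r.eval z * (starRingEnd ℂ) (s.eval z) :=
    (r.continuous).mul (continuous_star.comp s.continuous)
  refine Integrable.mono'
    (g := fun z => ∑ i ∈ Finset.range (r.natDegree + 1), ∑ k ∈ Finset.range (s.natDegree + 1),
      (‖r.coeff i‖ * ‖s.coeff k‖) * ‖z‖ ^ (i + k)) ?_ hcont.aestronglyMeasurable ?_
  · refine integrable_finset_sum _ fun i _ => integrable_finset_sum _ fun k _ => ?_
    exact (hmom (i + k)).const_mul _
  · refine Filter.Eventually.of_forall fun z => ?_
    rw [norm_mul, RCLike.norm_conj]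
    calc ‖r.eval z‖ * ‖s.eval z‖
        ≤ (∑ i ∈ Finset.range (r.natDegree + 1), ‖r.coeff i‖ * ‖z‖ ^ i) *
          (∑ k ∈ Finset.range (s.natDegree + 1), ‖s.coeff k‖ * ‖z‖ ^ k) := by
          exact mul_le_mul (eval_bound r z) (eval_bound s z) (norm_nonneg _)
            (Finset.sum_nonneg fun i _ => mul_nonneg (norm_nonneg _) (pow_nonneg (norm_nonneg _) _))
      _ = _ := by
          rw [Finset.sum_mul_sum]
          refine Finset.sum_congr rfl fun i _ => Finset.sum_congr rfl fun k _ => ?_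
          rw [pow_add]; ring


lemma ae_mem_measSupport (μ : Measure ℂ) : ∀ᵐ z ∂μ, z ∈ measSupport μ := by
  rw [MeasureTheory.ae_iff]
  refine measure_null_of_locally_null _ fun x hx => ?_
  simp only [Set.mem_setOf_eq, measSupport] at hx
  push_neg at hx
  obtain ⟨ε, hε, hμ⟩ := hx
  exact ⟨Metric.ball x ε, mem_nhdsWithin_of_mem_nhds (Metric.ball_mem_nhds x hε),
    le_antisymm hμ zero_le⟩

-- integral of q * conj q for q = ∑ C (c k) * p k
lemma integral_sq (μ : Measure ℂ)
    (hmom : ∀ n : ℕ, Integrable (fun z : ℂ => ‖z‖ ^ n) μ)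
    (p : ℕ → Polynomial ℂ)
    (horth : ∀ n m, ∫ z, (p n).eval z * (starRingEnd ℂ) ((p m).eval z) ∂μ
      = if n = m then 1 else 0)
    (hint : ∀ r s : Polynomial ℂ,
      Integrable (fun z => r.eval z * (starRingEnd ℂ) (s.eval z)) μ)
    (n : ℕ) (c : ℕ → ℂ) :
    ∫ z, (∑ k ∈ Finset.range (n+1), Polynomial.C (c k) * p k).eval z *
      (starRingEnd ℂ) ((∑ k ∈ Finset.range (n+1), Polynomial.C (c k) * p k).eval z) ∂μ
      = ((∑ k ∈ Finset.range (n+1), ‖c k‖ ^ 2 : ℝ) : ℂ) := by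
  have heval : ∀ z : ℂ, (∑ k ∈ Finset.range (n+1), Polynomial.C (c k) * p k).eval z
      = ∑ k ∈ Finset.range (n+1), c k * (p k).eval z := by
    intro z; rw [Polynomial.eval_finset_sum]
    exact Finset.sum_congr rfl fun k _ => by rw [Polynomial.eval_mul, Polynomial.eval_C]
  have key : (fun z => (∑ k ∈ Finset.range (n+1), Polynomial.C (c k) * p k).eval z *
      (starRingEnd ℂ) ((∑ k ∈ Finset.range (n+1), Polynomial.C (c k) * p k).eval z))
      = fun z => ∑ k ∈ Finset.range (n+1), ∑ l ∈ Finset.range (n+1),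
        (c k * (starRingEnd ℂ) (c l)) * ((p k).eval z * (starRingEnd ℂ) ((p l).eval z)) := by
    funext z
    rw [heval, map_sum, Finset.sum_mul_sum]
    refine Finset.sum_congr rfl fun k _ => Finset.sum_congr rfl fun l _ => ?_
    rw [map_mul]; ring
  rw [key, integral_finset_sum _ (fun k _ => integrable_finset_sum _ fun l _ =>
    ((hint (p k) (p l)).const_mul _))]
  have : ∀ k ∈ Finset.range (n+1),
      ∫ z, ∑ l ∈ Finset.range (n+1),
        (c k * (starRingEnd ℂ) (c l)) * ((p k).eval z * (starRingEnd ℂ) ((p l).eval z)) ∂μ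
      = ((‖c k‖ ^ 2 : ℝ) : ℂ) := by
    intro k hk
    rw [integral_finset_sum _ (fun l _ => (hint (p k) (p l)).const_mul _)]
    have : ∀ l ∈ Finset.range (n+1),
        ∫ z, (c k * (starRingEnd ℂ) (c l)) * ((p k).eval z * (starRingEnd ℂ) ((p l).eval z)) ∂μ
        = (c k * (starRingEnd ℂ) (c l)) * (if k = l then 1 else 0) := by
      intro l _
      rw [integral_const_mul, horth k l]
    rw [Finset.sum_congr rfl this]
    simp only [mul_ite, mul_one, mul_zero]
    rw [Finset.sum_ite_eq _ k, if_pos hk, Complex.mul_conj']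
    norm_cast
  rw [Finset.sum_congr rfl this]
  norm_cast
/-- Lemma 2.1: if `w` is a zero of `p j` for some `j ≤ n+1`, then
`|z₀ - w| ≥ |p_j(z₀)| / K_n(z₀,z₀)^{1/2} · dist(w, supp μ)`. -/
theorem stmt_0 (μ : Measure ℂ)
    (hmom : ∀ n : ℕ, Integrable (fun z : ℂ => ‖z‖ ^ n) μ)
    (hinf : (measSupport μ).Infinite)
    (p : ℕ → Polynomial ℂ)
    (hdeg : ∀ n, (p n).natDegree = n)
    (hlead : ∀ n, ∃ c : ℝ, 0 < c ∧ (p n).leadingCoeff = (c : ℂ))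
    (horth : ∀ n m, ∫ z, (p n).eval z * (starRingEnd ℂ) ((p m).eval z) ∂μ
      = if n = m then 1 else 0)
    (n j : ℕ) (hj : j ≤ n + 1) (z₀ w : ℂ) (hw : (p j).eval w = 0) :
    dist z₀ w ≥
      (‖(p j).eval z₀‖ /
        Real.sqrt (∑ k ∈ Finset.range (n + 1), ‖(p k).eval z₀‖ ^ 2)) *
      Metric.infDist w (measSupport μ) := by
  have hlc : ∀ m, (p m).leadingCoeff ≠ 0 := by
    intro m; obtain ⟨c, hc, hcc⟩ := hlead m
    rw [hcc]; exact_mod_cast ne_of_gt hc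
  set d := Metric.infDist w (measSupport μ) with hd_def
  have hd0 : 0 ≤ d := Metric.infDist_nonneg
  set K := ∑ k ∈ Finset.range (n + 1), ‖(p k).eval z₀‖ ^ 2 with hK_def
  -- K > 0
  have hK : 0 < K := by
    have h0 : p 0 = Polynomial.C ((p 0).coeff 0) :=
      Polynomial.eq_C_of_natDegree_le_zero (le_of_eq (hdeg 0))
    have ha : (p 0).coeff 0 ≠ 0 := by
      have := hlc 0; rwa [Polynomial.leadingCoeff, hdeg 0] at this
    have h1 : 0 < ‖(p 0).eval z₀‖ ^ 2 := by
      rw [h0, Polynomial.eval_C]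
      exact pow_pos (norm_pos_iff.mpr ha) 2
    refine lt_of_lt_of_le h1 ?_
    exact Finset.single_le_sum (f := fun k => ‖(p k).eval z₀‖ ^ 2)
      (fun k _ => sq_nonneg _) (Finset.mem_range.mpr (Nat.succ_pos n))
  have hsqK : 0 < Real.sqrt K := Real.sqrt_pos.mpr hK
  -- factor p j = (X - C w) * q
  set q := p j /ₘ (Polynomial.X - Polynomial.C w) with hq_def
  have hfact : (Polynomial.X - Polynomial.C w) * q = p j :=
    (Polynomial.mul_divByMonic_eq_iff_isRoot).mpr hw
  have hq0 : q ≠ 0 := by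
    intro h
    have : p j = 0 := by rw [← hfact, h, mul_zero]
    exact hlc j (by rw [this, Polynomial.leadingCoeff_zero])
  have hjq : j = 1 + q.natDegree := by
    have := hdeg j
    rw [← hfact, Polynomial.natDegree_mul (Polynomial.X_sub_C_ne_zero w) hq0,
      Polynomial.natDegree_X_sub_C] at this
    omega
  have hqn : q.natDegree ≤ n := by omega
  obtain ⟨c, hc⟩ := span_aux p hdeg hlc n q hqn
  set S := ∑ k ∈ Finset.range (n + 1), ‖c k‖ ^ 2 with hS_def
  have hS0 : 0 ≤ S := Finset.sum_nonneg fun k _ => sq_nonneg _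
  -- pointwise factorization
  have hpt : ∀ z : ℂ, (p j).eval z = (z - w) * q.eval z := by
    intro z
    rw [← hfact, Polynomial.eval_mul, Polynomial.eval_sub, Polynomial.eval_X, Polynomial.eval_C]
  -- ∫ |q|² = S
  have hIq : ∫ z, (‖q.eval z‖) ^ 2 ∂μ = S := by
    have h1 := integral_sq μ hmom p horth (integrable_mul_conj μ hmom) n c
    rw [← hc] at h1
    have h2 : (fun z => q.eval z * (starRingEnd ℂ) (q.eval z))
        = fun z => (((‖q.eval z‖) ^ 2 : ℝ) : ℂ) := by
      funext z
      rw [Complex.mul_conj, Complex.normSq_eq_norm_sq]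
    have h3 : ∫ z, ((‖q.eval z‖ ^ 2 : ℝ) : ℂ) ∂μ
        = ((∫ z, ‖q.eval z‖ ^ 2 ∂μ : ℝ) : ℂ) := integral_ofReal (𝕜 := ℂ)
    rw [h2, h3] at h1
    exact_mod_cast h1
  -- ∫ |p j|² = 1
  have hIp : ∫ z, (‖(p j).eval z‖) ^ 2 ∂μ = 1 := by
    have h1 := horth j j
    rw [if_pos rfl] at h1
    have h2 : (fun z => (p j).eval z * (starRingEnd ℂ) ((p j).eval z))
        = fun z => (((‖(p j).eval z‖) ^ 2 : ℝ) : ℂ) := by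
      funext z
      rw [Complex.mul_conj, Complex.normSq_eq_norm_sq]
    have h3 : ∫ z, ((‖(p j).eval z‖ ^ 2 : ℝ) : ℂ) ∂μ
        = ((∫ z, ‖(p j).eval z‖ ^ 2 ∂μ : ℝ) : ℂ) := integral_ofReal (𝕜 := ℂ)
    rw [h2, h3] at h1
    exact_mod_cast h1
  -- integrability of |q|² and |p j|²
  have hIntq : Integrable (fun z => (‖q.eval z‖) ^ 2) μ := by
    refine ((integrable_mul_conj μ hmom q q).norm).congr ?_
    refine Filter.Eventually.of_forall fun z => ?_
    show ‖q.eval z * (starRingEnd ℂ) (q.eval z)‖ = ‖q.eval z‖ ^ 2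
    rw [norm_mul, RCLike.norm_conj, sq]
  have hIntp : Integrable (fun z => (‖(p j).eval z‖) ^ 2) μ := by
    refine ((integrable_mul_conj μ hmom (p j) (p j)).norm).congr ?_
    refine Filter.Eventually.of_forall fun z => ?_
    show ‖(p j).eval z * (starRingEnd ℂ) ((p j).eval z)‖ = ‖(p j).eval z‖ ^ 2
    rw [norm_mul, RCLike.norm_conj, sq]
  -- key: d² * S ≤ 1
  have hkey : d ^ 2 * S ≤ 1 := by
    have hmono : ∫ z, d ^ 2 * (‖q.eval z‖) ^ 2 ∂μ
        ≤ ∫ z, (‖(p j).eval z‖) ^ 2 ∂μ := by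
      refine integral_mono_ae (hIntq.const_mul _) hIntp ?_
      filter_upwards [ae_mem_measSupport μ] with z hz
      have hdist : d ≤ ‖z - w‖ := by
        have := Metric.infDist_le_dist_of_mem (x := w) hz
        rwa [Complex.dist_eq, norm_sub_rev] at this
      calc d ^ 2 * (‖q.eval z‖) ^ 2
          ≤ (‖z - w‖) ^ 2 * (‖q.eval z‖) ^ 2 := by
            have : d ^ 2 ≤ (‖z - w‖) ^ 2 := pow_le_pow_left₀ hd0 hdist 2
            exact mul_le_mul_of_nonneg_right this (sq_nonneg _)
        _ = (‖(p j).eval z‖) ^ 2 := by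
            rw [hpt z, norm_mul, mul_pow]
    rw [integral_const_mul, hIq, hIp] at hmono
    exact hmono
  -- Cauchy-Schwarz: |q(z₀)| ≤ √S * √K
  have hCS : ‖q.eval z₀‖ ≤ Real.sqrt S * Real.sqrt K := by
    have heval : q.eval z₀ = ∑ k ∈ Finset.range (n+1), c k * (p k).eval z₀ := by
      rw [hc, Polynomial.eval_finset_sum]
      exact Finset.sum_congr rfl fun k _ => by rw [Polynomial.eval_mul, Polynomial.eval_C]
    calc ‖q.eval z₀‖
        ≤ ∑ k ∈ Finset.range (n+1), ‖c k‖ * ‖(p k).eval z₀‖ := by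
          rw [heval]
          refine (norm_sum_le _ _).trans ?_
          refine le_of_eq (Finset.sum_congr rfl fun k _ => ?_)
          rw [norm_mul]
      _ ≤ Real.sqrt S * Real.sqrt K := by
          have h1 := Finset.sum_mul_sq_le_sq_mul_sq (Finset.range (n+1))
            (fun k => ‖c k‖) (fun k => ‖(p k).eval z₀‖)
          have h2 : 0 ≤ ∑ k ∈ Finset.range (n+1), ‖c k‖ * ‖(p k).eval z₀‖ :=
            Finset.sum_nonneg fun k _ => mul_nonneg (norm_nonneg _) (norm_nonneg _)
          calc ∑ k ∈ Finset.range (n+1), ‖c k‖ * ‖(p k).eval z₀‖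
              = Real.sqrt ((∑ k ∈ Finset.range (n+1), ‖c k‖ * ‖(p k).eval z₀‖) ^ 2) :=
                (Real.sqrt_sq h2).symm
            _ ≤ Real.sqrt (S * K) := Real.sqrt_le_sqrt h1
            _ = Real.sqrt S * Real.sqrt K := Real.sqrt_mul hS0 _
  -- final algebra
  have hdz : ‖(p j).eval z₀‖ = dist z₀ w * ‖q.eval z₀‖ := by
    rw [hpt z₀, norm_mul, Complex.dist_eq]
  have hSd : Real.sqrt S * d ≤ 1 := by
    have h1 : Real.sqrt S * d = Real.sqrt (S * d ^ 2) := by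
      rw [Real.sqrt_mul hS0, Real.sqrt_sq hd0]
    rw [h1]
    calc Real.sqrt (S * d ^ 2) ≤ Real.sqrt 1 := Real.sqrt_le_sqrt (by nlinarith)
      _ = 1 := Real.sqrt_one
  rw [ge_iff_le, div_mul_eq_mul_div, div_le_iff₀ hsqK]
  calc ‖(p j).eval z₀‖ * d
      = dist z₀ w * ‖q.eval z₀‖ * d := by rw [hdz]
    _ ≤ dist z₀ w * (Real.sqrt S * Real.sqrt K) * d := by
        have := mul_le_mul_of_nonneg_left hCS (dist_nonneg (x := z₀) (y := w))
        exact mul_le_mul_of_nonneg_right this hd0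
    _ = dist z₀ w * Real.sqrt K * (Real.sqrt S * d) := by ring
    _ ≤ dist z₀ w * Real.sqrt K * 1 := by
        refine mul_le_mul_of_nonneg_left hSd ?_
        exact mul_nonneg dist_nonneg (Real.sqrt_nonneg _)
    _ = dist z₀ w * Real.sqrt K := mul_one _
end

section
/- Let A be a self-adjoint operator on a finite-dimensional inner product space, β ∈ ℝ, and ψ ≠ 0 a vector with ‖(A − β)ψ‖ ≤ ε‖ψ‖. Then A has an eigenvalue λ with |λ − β| ≤ ε. Applied to the truncated Jacobi matrix L_{j;F} of the paper's example with j = 2(n+1)² − 1, trial vector ψ = (p_0^{(0)}(0), …, p_{j−1}^{(0)}(0)), and β = β_n: since ‖(L_{j;F} − β_n)ψ‖²/‖ψ‖² ≤ 4·Σ_{k=0}^{n²−1} 3^{2k} / Σ_{k=0}^{(n+1)²−1} 3^{2k} ≤ 4·3^{−4n}, L_{j;F} has an eigenvalue within 2·3^{−2n} of β_n. -/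
set_option maxHeartbeats 1000000

open Polynomial Matrix

lemma eval_charpoly_eq_det' {m : ℕ} (A : Matrix (Fin m) (Fin m) ℝ) (x : ℝ) :
    A.charpoly.eval x = (Matrix.scalar (Fin m) x - A).det := by
  rw [Matrix.charpoly, _root_.eval_det, Matrix.matPolyEquiv_charmatrix]
  simp

lemma isRoot_of_mem_spectrum' {m : ℕ} {A : Matrix (Fin m) (Fin m) ℝ} {x : ℝ}
    (hx : x ∈ spectrum ℝ A) : A.charpoly.IsRoot x := by
  rw [spectrum.mem_iff] at hx
  have h1 : algebraMap ℝ (Matrix (Fin m) (Fin m) ℝ) x = Matrix.scalar (Fin m) x := by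
    ext i j
    simp [Matrix.algebraMap_eq_diagonal, Matrix.scalar_apply, Matrix.diagonal_apply,
      Pi.algebraMap_apply]
  rw [h1, Matrix.isUnit_iff_isUnit_det, isUnit_iff_ne_zero, not_ne_iff] at hx
  rw [Polynomial.IsRoot, eval_charpoly_eq_det', hx]

lemma approx_eig {m : ℕ} (A : Matrix (Fin m) (Fin m) ℝ) (hA : A.IsSymm)
    (μ ε : ℝ) (ψ : Fin m → ℝ) (hψ : ψ ≠ 0)
    (hle : Real.sqrt (∑ i, (A.mulVec ψ i - μ * ψ i) ^ 2) ≤ ε * Real.sqrt (∑ i, ψ i ^ 2)) :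
    ∃ lam : ℝ, A.charpoly.IsRoot lam ∧ |lam - μ| ≤ ε := by
  have hH : A.IsHermitian := by
    rw [Matrix.IsHermitian, Matrix.conjTranspose_eq_transpose_of_trivial]; exact hA
  set U : Matrix (Fin m) (Fin m) ℝ := (hH.eigenvectorUnitary : Matrix (Fin m) (Fin m) ℝ) with hUdef
  have hU1 : star U * U = 1 := Matrix.mem_unitaryGroup_iff'.mp hH.eigenvectorUnitary.2
  have hU2 : U * star U = 1 := Matrix.mem_unitaryGroup_iff.mp hH.eigenvectorUnitary.2
  have hstarU : star U = Uᵀ := Matrix.conjTranspose_eq_transpose_of_trivial U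
  have hdot : ∀ v w : Fin m → ℝ, (U *ᵥ v) ⬝ᵥ (U *ᵥ w) = v ⬝ᵥ w := by
    intro v w
    rw [Matrix.dotProduct_mulVec, Matrix.vecMul_mulVec, ← hstarU, hU1, Matrix.vecMul_one]
  set lam : Fin m → ℝ := hH.eigenvalues with hlam
  set c : Fin m → ℝ := star U *ᵥ ψ with hc
  have hψc : ψ = U *ᵥ c := by
    rw [hc, Matrix.mulVec_mulVec, hU2, Matrix.one_mulVec]
  have hAc : A *ᵥ ψ = U *ᵥ (fun i => lam i * c i) := by
    have hspec := hH.spectral_theorem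
    calc A *ᵥ ψ = (U * Matrix.diagonal (RCLike.ofReal ∘ lam) * star U) *ᵥ ψ := by
          rw [Unitary.conjStarAlgAut_apply] at hspec; exact congrArg (fun B => B *ᵥ ψ) hspec
      _ = U *ᵥ (Matrix.diagonal (RCLike.ofReal ∘ lam) *ᵥ (star U *ᵥ ψ)) := by
          rw [Matrix.mulVec_mulVec, Matrix.mulVec_mulVec]
      _ = U *ᵥ (fun i => lam i * c i) := by
          rw [← hc]
          have hD : diagonal (RCLike.ofReal ∘ lam) *ᵥ c = fun i => lam i * c i := by
            funext i
            simp [Matrix.mulVec_diagonal]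
          rw [hD]
  have hdiff : (fun i => A.mulVec ψ i - μ * ψ i) = U *ᵥ (fun i => (lam i - μ) * c i) := by
    funext i
    have : A.mulVec ψ i - μ * ψ i = (U *ᵥ (fun i => lam i * c i)) i - μ * (U *ᵥ c) i := by
      rw [← hAc, ← hψc]
    rw [this]
    simp [Matrix.mulVec, dotProduct, Finset.mul_sum, ← Finset.sum_sub_distrib, mul_sub,
      sub_mul, mul_assoc, mul_left_comm]
  have hS1 : ∑ i, (A.mulVec ψ i - μ * ψ i) ^ 2 = ∑ i, ((lam i - μ) * c i) ^ 2 := by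
    have := hdot (fun i => (lam i - μ) * c i) (fun i => (lam i - μ) * c i)
    simpa [dotProduct, pow_two, ← hdiff] using this
  have hS2 : ∑ i, ψ i ^ 2 = ∑ i, c i ^ 2 := by
    have := hdot c c
    simpa [dotProduct, pow_two, ← hψc] using this
  have hcne : c ≠ 0 := by
    intro h
    apply hψ
    rw [hψc, h, Matrix.mulVec_zero]
  obtain ⟨i₀, hi₀⟩ := Function.ne_iff.mp hcne
  have hi₀' : c i₀ ≠ 0 := by simpa using hi₀
  have hS2pos : 0 < ∑ i, c i ^ 2 :=
    Finset.sum_pos' (fun i _ => sq_nonneg _) ⟨i₀, Finset.mem_univ _, by positivity⟩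
  have hεnn : 0 ≤ ε := by
    by_contra h
    push_neg at h
    have h2 : 0 < Real.sqrt (∑ i, ψ i ^ 2) := by
      rw [hS2]; exact Real.sqrt_pos.mpr hS2pos
    nlinarith [Real.sqrt_nonneg (∑ i, (A.mulVec ψ i - μ * ψ i) ^ 2)]
  have hsq : ∑ i, ((lam i - μ) * c i) ^ 2 ≤ ε ^ 2 * ∑ i, c i ^ 2 := by
    have h1 : (0:ℝ) ≤ ∑ i, (A.mulVec ψ i - μ * ψ i) ^ 2 := Finset.sum_nonneg fun i _ => sq_nonneg _
    have h2 : (0:ℝ) ≤ ∑ i, ψ i ^ 2 := Finset.sum_nonneg fun i _ => sq_nonneg _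
    have := mul_self_le_mul_self (Real.sqrt_nonneg _) hle
    rw [Real.mul_self_sqrt h1] at this
    calc ∑ i, ((lam i - μ) * c i) ^ 2 = ∑ i, (A.mulVec ψ i - μ * ψ i) ^ 2 := hS1.symm
      _ ≤ ε * Real.sqrt (∑ i, ψ i ^ 2) * (ε * Real.sqrt (∑ i, ψ i ^ 2)) := this
      _ = ε ^ 2 * ∑ i, ψ i ^ 2 := by
          rw [mul_mul_mul_comm, Real.mul_self_sqrt h2, sq]
      _ = ε ^ 2 * ∑ i, c i ^ 2 := by rw [hS2]
  -- pick minimizing index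
  obtain ⟨k, -, hk⟩ := Finset.exists_min_image Finset.univ (fun i => |lam i - μ|)
    ⟨i₀, Finset.mem_univ _⟩
  refine ⟨lam k, isRoot_of_mem_spectrum' (hH.eigenvalues_mem_spectrum_real k), ?_⟩
  by_contra hcon
  push_neg at hcon
  have key : ∀ i, ε ^ 2 * c i ^ 2 ≤ ((lam i - μ) * c i) ^ 2 := by
    intro i
    have h1 : ε < |lam i - μ| := lt_of_lt_of_le hcon (hk i (Finset.mem_univ i))
    have h2 : ε ^ 2 ≤ (lam i - μ) ^ 2 := by
      rw [← sq_abs (lam i - μ)]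
      exact pow_le_pow_left₀ hεnn h1.le 2
    nlinarith [sq_nonneg (c i)]
  have hstrict : ε ^ 2 * c i₀ ^ 2 < ((lam i₀ - μ) * c i₀) ^ 2 := by
    have h1 : ε < |lam i₀ - μ| := lt_of_lt_of_le hcon (hk i₀ (Finset.mem_univ i₀))
    have h2 : ε ^ 2 < (lam i₀ - μ) ^ 2 := by
      rw [← sq_abs (lam i₀ - μ)]
      exact pow_lt_pow_left₀ h1 hεnn (by norm_num)
    have h3 : 0 < c i₀ ^ 2 := by positivity
    nlinarith
  have : ε ^ 2 * ∑ i, c i ^ 2 < ∑ i, ((lam i - μ) * c i) ^ 2 := by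
    rw [Finset.mul_sum]
    exact Finset.sum_lt_sum (fun i _ => key i) ⟨i₀, Finset.mem_univ _, hstrict⟩
  linarith

lemma sum_h_aux (c : ℕ) : ∀ N, N ≤ c →
    ∑ k ∈ Finset.range (2*N), (if k % 2 = 0 ∧ k/2 < c then (4:ℝ)*9^(k/2) else 0)
      = 4 * ∑ m ∈ Finset.range N, (9:ℝ)^m := by
  intro N
  induction N with
  | zero => simp
  | succ N ih =>
    intro hN
    have h2 : 2*(N+1) = 2*N+1+1 := by ring
    rw [h2, Finset.sum_range_succ, Finset.sum_range_succ, ih (by omega)]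
    rw [if_pos (show (2*N) % 2 = 0 ∧ (2*N)/2 < c by omega), if_neg (by omega)]
    have h3 : (2*N)/2 = N := by omega
    rw [h3, Finset.sum_range_succ]
    ring

lemma geom_le_aux : ∀ N, ∑ m ∈ Finset.range N, (9:ℝ)^m ≤ 9^N := by
  intro N
  induction N with
  | zero => simp
  | succ N ih =>
    rw [Finset.sum_range_succ, pow_succ]
    nlinarith [pow_nonneg (by norm_num : (0:ℝ) ≤ 9) N]


/-- (i) A self-adjoint matrix with an `ε`-approximate eigenvector at `β` has an
eigenvalue within `ε` of `β`; (ii) applied to the truncated Jacobi matrix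
`L_{j;F}` with `j = 2(n+1)² − 1` and trial vector `(p_0⁰(0), …, p_{j−1}⁰(0))`,
`L_{j;F}` has an eigenvalue within `2·3^{−2n}` of `β_n`. -/
theorem stmt_17 (n : ℕ) (β : ℕ → ℝ) (hβ : ∀ m, |β m| < 1)
    (M : Matrix (Fin (2 * (n + 1) ^ 2 - 1)) (Fin (2 * (n + 1) ^ 2 - 1)) ℝ)
    (hMsym : M.IsSymm)
    (hMdiag : ∀ i, M i i = β (Nat.sqrt (((i : ℕ) + 1) / 2)))
    (hMoff : ∀ i j : Fin (2 * (n + 1) ^ 2 - 1), (i : ℕ) + 1 = (j : ℕ) →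
      M i j = (if Odd ((i : ℕ) + 1) then (3 : ℝ) else 1))
    (hMtri : ∀ i j : Fin (2 * (n + 1) ^ 2 - 1), 1 < |(i : ℤ) - (j : ℤ)| → M i j = 0) :
    (∀ (m : ℕ) (A : Matrix (Fin m) (Fin m) ℝ), A.IsSymm →
      ∀ (μ ε : ℝ) (ψ : Fin m → ℝ), ψ ≠ 0 →
        Real.sqrt (∑ i, (A.mulVec ψ i - μ * ψ i) ^ 2)
          ≤ ε * Real.sqrt (∑ i, ψ i ^ 2) →
        ∃ lam : ℝ, A.charpoly.IsRoot lam ∧ |lam - μ| ≤ ε) ∧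
    (∃ lam : ℝ, M.charpoly.IsRoot lam ∧ |lam - β n| ≤ 2 / 3 ^ (2 * n)) := by
  have approx_eig' : ∀ {m : ℕ} (A : Matrix (Fin m) (Fin m) ℝ), A.IsSymm →
      ∀ (μ ε : ℝ) (ψ : Fin m → ℝ), ψ ≠ 0 →
        Real.sqrt (∑ i, (A.mulVec ψ i - μ * ψ i) ^ 2) ≤ ε * Real.sqrt (∑ i, ψ i ^ 2) →
        ∃ lam : ℝ, A.charpoly.IsRoot lam ∧ |lam - μ| ≤ ε :=
    fun {m} A hA μ ε ψ hψ hle => approx_eig A hA μ ε ψ hψ hle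
  refine ⟨fun m A hA μ ε ψ hψ hle => approx_eig' A hA μ ε ψ hψ hle, ?_⟩
  have hsq : (n+1)^2 = n^2 + 2*n + 1 := by ring
  set ψ : Fin (2 * (n + 1) ^ 2 - 1) → ℝ :=
    fun i => if (i:ℕ) % 2 = 0 then (-3:ℝ)^((i:ℕ)/2) else 0 with hψdef
  have hψne : ψ ≠ 0 := by
    intro h
    have := congrFun h ⟨0, by omega⟩
    simp [hψdef] at this
  -- pointwise formula
  have hpt : ∀ i : Fin (2 * (n + 1) ^ 2 - 1), M.mulVec ψ i - β n * ψ i =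
      (if (i:ℕ) % 2 = 0 ∧ (i:ℕ)/2 < n^2
        then (β (Nat.sqrt ((i:ℕ)/2)) - β n) * (-3:ℝ)^((i:ℕ)/2) else 0) := by
    intro i
    have hik : (i:ℕ) < 2 * (n + 1) ^ 2 - 1 := i.2
    have hmv : M.mulVec ψ i = ∑ j, M i j * ψ j := rfl
    rcases Nat.even_or_odd (i:ℕ) with he | ho
    · have he2 : (i:ℕ) % 2 = 0 := Nat.even_iff.mp he
      have hsum : M.mulVec ψ i = M i i * ψ i := by
        rw [hmv]
        apply Finset.sum_eq_single_of_mem i (Finset.mem_univ i)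
        intro j _ hji
        rcases Nat.even_or_odd (j:ℕ) with hje | hjo
        · have hje2 : (j:ℕ) % 2 = 0 := Nat.even_iff.mp hje
          have h4 : (i:ℕ) ≠ (j:ℕ) := fun h => hji (Fin.ext h).symm
          have hMij : M i j = 0 := by
            apply hMtri
            have hi' : ((i:ℤ)) = ((i:ℕ):ℤ) := rfl
            have hj' : ((j:ℤ)) = ((j:ℕ):ℤ) := rfl
            rw [lt_abs, hi', hj']
            omega
          rw [hMij, zero_mul]
        · have hj1 : (j:ℕ) % 2 = 1 := Nat.odd_iff.mp hjo
          have : ψ j = 0 := if_neg (by omega)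
          rw [this, mul_zero]
      have harg : ((i:ℕ)+1)/2 = (i:ℕ)/2 := by omega
      have hψi : ψ i = (-3:ℝ)^((i:ℕ)/2) := if_pos he2
      rw [hsum, hMdiag i, harg, hψi]
      by_cases hlt : (i:ℕ)/2 < n^2
      · rw [if_pos ⟨he2, hlt⟩]; ring
      · rw [if_neg (by tauto)]
        have h1 : n^2 ≤ (i:ℕ)/2 := by omega
        have h2 : (i:ℕ)/2 < (n+1)^2 := by omega
        have hs : Nat.sqrt ((i:ℕ)/2) = n := (Nat.eq_sqrt'.mpr ⟨h1, h2⟩).symm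
        rw [hs]; ring
    · have ho2 : (i:ℕ) % 2 = 1 := Nat.odd_iff.mp ho
      have hik2 : (i:ℕ) + 1 < 2*(n+1)^2 - 1 := by omega
      set a : Fin (2*(n+1)^2-1) := ⟨(i:ℕ)-1, by omega⟩ with hadef
      set b : Fin (2*(n+1)^2-1) := ⟨(i:ℕ)+1, by omega⟩ with hbdef
      have hav : (a:ℕ) = (i:ℕ)-1 := rfl
      have hbv : (b:ℕ) = (i:ℕ)+1 := rfl
      have hab : a ≠ b := by
        intro h
        have := congrArg Fin.val h
        rw [hav, hbv] at this
        omega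
      have hsum : M.mulVec ψ i = M i a * ψ a + M i b * ψ b := by
        rw [hmv]
        have hz : ∀ j ∈ (Finset.univ : Finset (Fin (2*(n+1)^2-1))),
            j ∉ ({a, b} : Finset _) → M i j * ψ j = 0 := by
          intro j _ hj
          simp only [Finset.mem_insert, Finset.mem_singleton] at hj
          push_neg at hj
          rcases Nat.even_or_odd (j:ℕ) with hje | hjo
          · have hje2 : (j:ℕ) % 2 = 0 := Nat.even_iff.mp hje
            have h4 : (j:ℕ) ≠ (i:ℕ)-1 := fun h => hj.1 (Fin.ext (by rw [hav]; exact h))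
            have h5 : (j:ℕ) ≠ (i:ℕ)+1 := fun h => hj.2 (Fin.ext (by rw [hbv]; exact h))
            have hMij : M i j = 0 := by
              apply hMtri
              have hi' : ((i:ℤ)) = ((i:ℕ):ℤ) := rfl
              have hj' : ((j:ℤ)) = ((j:ℕ):ℤ) := rfl
              rw [lt_abs, hi', hj']
              omega
            rw [hMij, zero_mul]
          · have hj1 : (j:ℕ) % 2 = 1 := Nat.odd_iff.mp hjo
            have : ψ j = 0 := if_neg (by omega)
            rw [this, mul_zero]
        rw [← Finset.sum_subset (Finset.subset_univ ({a,b})) hz, Finset.sum_pair hab]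
      have hMia : M i a = 3 := by
        have h1 : (a:ℕ) + 1 = (i:ℕ) := by omega
        have h3 : M i a = M a i := by
          have := congrFun (congrFun hMsym a) i
          simpa [Matrix.transpose_apply] using this
        have hodd : Odd ((a:ℕ)+1) := by rw [h1]; exact Nat.odd_iff.mpr ho2
        rw [h3, hMoff a i h1, if_pos hodd]
      have hMib : M i b = 1 := by
        rw [hMoff i b hbv.symm, if_neg (by simp [Nat.odd_iff]; omega)]
      have hψa : ψ a = (-3:ℝ)^((i:ℕ)/2) := by
        show (if (a:ℕ) % 2 = 0 then (-3:ℝ)^((a:ℕ)/2) else 0) = _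
        rw [if_pos (by omega)]
        congr 1
        omega
      have hψb : ψ b = (-3:ℝ)^((i:ℕ)/2 + 1) := by
        show (if (b:ℕ) % 2 = 0 then (-3:ℝ)^((b:ℕ)/2) else 0) = _
        rw [if_pos (by omega)]
        congr 1
        omega
      have hψi : ψ i = 0 := if_neg (by omega)
      rw [hsum, hMia, hMib, hψa, hψb, hψi]
      rw [if_neg (by omega : ¬((i:ℕ) % 2 = 0 ∧ (i:ℕ)/2 < n^2))]
      ring
  set ε : ℝ := 2 / 3^(2*n) with hεdef
  have hεpos : 0 < ε := by positivity
  have hS1le : ∑ i, (M.mulVec ψ i - β n * ψ i)^2 ≤ 4 * 9^(n^2) := by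
    calc ∑ i, (M.mulVec ψ i - β n * ψ i)^2
        ≤ ∑ i : Fin (2*(n+1)^2-1),
            (if (i:ℕ)%2=0 ∧ (i:ℕ)/2 < n^2 then (4:ℝ)*9^((i:ℕ)/2) else 0) := by
          apply Finset.sum_le_sum
          intro i _
          rw [hpt i]
          by_cases hc : (i:ℕ)%2=0 ∧ (i:ℕ)/2 < n^2
          · rw [if_pos hc, if_pos hc]
            have h9 : ((-3:ℝ)^((i:ℕ)/2))^2 = 9^((i:ℕ)/2) := by
              rw [← pow_mul, mul_comm, pow_mul]
              norm_num
            have hb1 := abs_lt.mp (hβ (Nat.sqrt ((i:ℕ)/2)))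
            have hb2 := abs_lt.mp (hβ n)
            rw [mul_pow, h9]
            have h4 : (β (Nat.sqrt ((i:ℕ)/2)) - β n)^2 ≤ 4 := by nlinarith
            nlinarith [pow_nonneg (by norm_num : (0:ℝ) ≤ 9) ((i:ℕ)/2)]
          · rw [if_neg hc, if_neg hc]
            norm_num
      _ = ∑ k ∈ Finset.range (2*(n+1)^2-1),
            (if k%2=0 ∧ k/2 < n^2 then (4:ℝ)*9^(k/2) else 0) :=
          Fin.sum_univ_eq_sum_range
            (fun k => if k%2=0 ∧ k/2 < n^2 then (4:ℝ)*9^(k/2) else 0) (2*(n+1)^2-1)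
      _ = ∑ k ∈ Finset.range (2*n^2),
            (if k%2=0 ∧ k/2 < n^2 then (4:ℝ)*9^(k/2) else 0) := by
          symm
          apply Finset.sum_subset (Finset.range_subset_range.mpr (by omega))
          intro k hk hk2
          simp only [Finset.mem_range] at hk hk2
          rw [if_neg (by omega)]
      _ = 4 * ∑ m ∈ Finset.range (n^2), (9:ℝ)^m := sum_h_aux _ _ le_rfl
      _ ≤ 4 * 9^(n^2) := by
          have := geom_le_aux (n^2)
          linarith
  have hS2ge : (9:ℝ)^(n^2 + 2*n) ≤ ∑ i, ψ i ^2 := by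
    have h0 : 2*(n+1)^2-2 < 2*(n+1)^2-1 := by omega
    have hle := Finset.single_le_sum (f := fun i => ψ i^2) (fun i _ => sq_nonneg (ψ i))
      (Finset.mem_univ (⟨2*(n+1)^2-2, h0⟩ : Fin (2*(n+1)^2-1)))
    refine le_trans (le_of_eq ?_) hle
    show (9:ℝ)^(n^2+2*n) = (if (2*(n+1)^2-2) % 2 = 0 then (-3:ℝ)^((2*(n+1)^2-2)/2) else 0)^2
    rw [if_pos (by omega)]
    have he : (2*(n+1)^2-2)/2 = n^2+2*n := by omega
    rw [he, ← pow_mul, mul_comm ((n^2+2*n)) 2, pow_mul]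
    norm_num
  have hkey : ∑ i, (M.mulVec ψ i - β n * ψ i)^2 ≤ ε^2 * ∑ i, ψ i^2 := by
    have hε2 : ε^2 = 4 / 9^(2*n) := by
      rw [hεdef, div_pow]
      congr 1
      · norm_num
      · rw [← pow_mul, show 2*n*2 = 2*(2*n) by ring, pow_mul]
        norm_num
    have h9 : (9:ℝ)^(n^2+2*n) = 9^(n^2) * 9^(2*n) := by rw [pow_add]
    have hpow : (0:ℝ) < 9^(2*n) := by positivity
    calc ∑ i, (M.mulVec ψ i - β n * ψ i)^2 ≤ 4*9^(n^2) := hS1le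
      _ = ε^2 * 9^(n^2+2*n) := by rw [hε2, h9]; field_simp
      _ ≤ ε^2 * ∑ i, ψ i^2 := by nlinarith [sq_nonneg ε]
  have hfin : Real.sqrt (∑ i, (M.mulVec ψ i - β n * ψ i)^2)
      ≤ ε * Real.sqrt (∑ i, ψ i^2) := by
    have h1 := Real.sqrt_le_sqrt hkey
    rwa [Real.sqrt_mul (sq_nonneg ε), Real.sqrt_sq hεpos.le] at h1
  exact approx_eig' M hMsym (β n) ε ψ hψne hfin
end
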